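/- arXiv:2207.06926 — 2 statements merged into one kernel-verified Lean document; each statement's English description precedes it below -/
import Mathlib

section
/- Fix positive constants V₁, V₂, P, C_α, θ ∈ (0,1), TOL > 0, and positive cost weights so that the total work is W(M₁, M₂) = M₁·N·P² + M₁·M₂·N·P for fixed N, P > 0. The minimization of W over M₁, M₂ > 0 subject to the variance constraint C_α²(V₁/M₁ + V₂/(M₁M₂)) = (1−θ)² TOL² is attained at M₂ = √(V₂ P / V₁) and M₁ = (V₁ + √(V₁V₂/P)) · C_α² / ((1−θ)² TOL²). -/
open Real

set_option maxHeartbeats 1000000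

/-- The minimization of the DLMC work `W(M₁,M₂) = M₁NP² + M₁M₂NP` over `M₁, M₂ > 0`
subject to the variance constraint `C_α²(V₁/M₁ + V₂/(M₁M₂)) = (1−θ)²TOL²` is attained
uniquely at `M₂ = √(V₂P/V₁)` and `M₁ = (V₁ + √(V₁V₂/P))·C_α²/((1−θ)²TOL²)`. -/
theorem dlmc_optimal_samples (V₁ V₂ P N Cα TOL θ : ℝ)
    (hV₁ : 0 < V₁) (hV₂ : 0 < V₂) (hP : 0 < P) (hN : 0 < N)
    (hCα : 0 < Cα) (hTOL : 0 < TOL) (hθ : 0 < θ) (hθ1 : θ < 1) :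
    let W : ℝ → ℝ → ℝ := fun M₁ M₂ => M₁ * N * P ^ 2 + M₁ * M₂ * N * P
    let M₂star : ℝ := Real.sqrt (V₂ * P / V₁)
    let M₁star : ℝ := (V₁ + Real.sqrt (V₁ * V₂ / P)) * Cα ^ 2 / ((1 - θ) ^ 2 * TOL ^ 2)
    Cα ^ 2 * (V₁ / M₁star + V₂ / (M₁star * M₂star)) = (1 - θ) ^ 2 * TOL ^ 2 ∧
    (∀ M₁ M₂ : ℝ, 0 < M₁ → 0 < M₂ →
      Cα ^ 2 * (V₁ / M₁ + V₂ / (M₁ * M₂)) = (1 - θ) ^ 2 * TOL ^ 2 →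
      W M₁star M₂star ≤ W M₁ M₂) ∧
    (∀ M₁ M₂ : ℝ, 0 < M₁ → 0 < M₂ →
      Cα ^ 2 * (V₁ / M₁ + V₂ / (M₁ * M₂)) = (1 - θ) ^ 2 * TOL ^ 2 →
      W M₁ M₂ = W M₁star M₂star → M₁ = M₁star ∧ M₂ = M₂star) := by
  intro W M₂star M₁star
  have h1θ : 0 < 1 - θ := by linarith
  set K : ℝ := (1 - θ) ^ 2 * TOL ^ 2 with hKdef
  have hK : 0 < K := mul_pos (pow_pos h1θ 2) (pow_pos hTOL 2)
  set c : ℝ := Real.sqrt V₁ with hc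
  set d : ℝ := Real.sqrt V₂ with hd
  set e : ℝ := Real.sqrt P with he
  have hcp : 0 < c := Real.sqrt_pos.2 hV₁
  have hdp : 0 < d := Real.sqrt_pos.2 hV₂
  have hep : 0 < e := Real.sqrt_pos.2 hP
  have hc2 : c ^ 2 = V₁ := Real.sq_sqrt hV₁.le
  have hd2 : d ^ 2 = V₂ := Real.sq_sqrt hV₂.le
  have he2 : e ^ 2 = P := Real.sq_sqrt hP.le
  have hM₂s : M₂star = d * e / c := by
    show Real.sqrt (V₂ * P / V₁) = _
    rw [Real.sqrt_div (mul_pos hV₂ hP).le, Real.sqrt_mul hV₂.le]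
  have hM₁s : M₁star = (c ^ 2 + c * d / e) * Cα ^ 2 / K := by
    show (V₁ + Real.sqrt (V₁ * V₂ / P)) * Cα ^ 2 / K = _
    rw [Real.sqrt_div (mul_pos hV₁ hV₂).le, Real.sqrt_mul hV₁.le, hc2]
  have hM₂sp : 0 < M₂star := by rw [hM₂s]; positivity
  have hM₁sp : 0 < M₁star := by rw [hM₁s]; positivity
  have hWstar : W M₁star M₂star = Cα ^ 2 * N * e ^ 2 * (c * e + d) ^ 2 / K := by
    show M₁star * N * P ^ 2 + M₁star * M₂star * N * P = _
    rw [hM₁s, hM₂s, ← he2]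
    field_simp
  have constr : ∀ M₁ M₂ : ℝ, 0 < M₁ → 0 < M₂ →
      Cα ^ 2 * (V₁ / M₁ + V₂ / (M₁ * M₂)) = K →
      Cα ^ 2 * (c ^ 2 * M₂ + d ^ 2) = K * (M₁ * M₂) := by
    intro M₁ M₂ hM₁ hM₂ hcon
    rw [hc2, hd2]
    field_simp at hcon
    have h2 : M₁ * (Cα ^ 2 * (V₁ * M₂ + V₂)) = M₁ * (K * (M₁ * M₂)) := by
      linear_combination M₁ * hcon
    exact mul_left_cancel₀ hM₁.ne' h2
  refine ⟨?_, ?_, ?_⟩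
  · rw [hM₁s, hM₂s, ← hc2, ← hd2]
    field_simp
  · intro M₁ M₂ hM₁ hM₂ hcon
    have hc' := constr M₁ M₂ hM₁ hM₂ hcon
    have main : Cα ^ 2 * (c * e + d) ^ 2 * M₂ ≤ K * M₁ * (e ^ 2 + M₂) * M₂ := by
      have h1 : K * M₁ * (e ^ 2 + M₂) * M₂ = Cα ^ 2 * (c ^ 2 * M₂ + d ^ 2) * (e ^ 2 + M₂) := by
        linear_combination (e ^ 2 + M₂) * hc'.symm
      rw [h1]
      nlinarith [mul_nonneg (sq_nonneg Cα) (sq_nonneg (c * M₂ - d * e))]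
    have main2 : Cα ^ 2 * (c * e + d) ^ 2 ≤ K * M₁ * (e ^ 2 + M₂) :=
      le_of_mul_le_mul_right main hM₂
    have hW : W M₁ M₂ = N * e ^ 2 * (M₁ * (e ^ 2 + M₂)) := by
      show M₁ * N * P ^ 2 + M₁ * M₂ * N * P = _
      rw [← he2]; ring
    rw [hWstar, hW, div_le_iff₀ hK]
    nlinarith [mul_le_mul_of_nonneg_left main2 (show (0:ℝ) ≤ N * e ^ 2 by positivity)]
  · intro M₁ M₂ hM₁ hM₂ hcon hWeq
    have hc' := constr M₁ M₂ hM₁ hM₂ hcon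
    have hW : W M₁ M₂ = N * e ^ 2 * (M₁ * (e ^ 2 + M₂)) := by
      show M₁ * N * P ^ 2 + M₁ * M₂ * N * P = _
      rw [← he2]; ring
    rw [hW, hWstar] at hWeq
    have heq1 : K * M₁ * (e ^ 2 + M₂) = Cα ^ 2 * (c * e + d) ^ 2 := by
      field_simp at hWeq
      have h2 : (N * e ^ 2) * (K * M₁ * (e ^ 2 + M₂)) = (N * e ^ 2) * (Cα ^ 2 * (c * e + d) ^ 2) := by
        linear_combination (N * e ^ 2) * hWeq
      exact mul_left_cancel₀ (by positivity) h2
    have heq2 : Cα ^ 2 * (c * M₂ - d * e) ^ 2 = 0 := by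
      linear_combination M₂ * heq1 + (e ^ 2 + M₂) * hc'
    have h0 : (c * M₂ - d * e) ^ 2 = 0 :=
      (mul_eq_zero.mp heq2).resolve_left (by positivity)
    have hsub : c * M₂ - d * e = 0 := by
      exact pow_eq_zero_iff two_ne_zero |>.mp h0
    have hM2 : M₂ = M₂star := by
      rw [hM₂s, eq_div_iff hcp.ne']
      linarith
    refine ⟨?_, hM2⟩
    have hM2d : M₂ = d * e / c := by rw [← hM₂s]; exact hM2
    rw [hM2d] at hc'
    rw [hM₁s]
    field_simp at hc' ⊢
    refine mul_left_cancel₀ hdp.ne' ?_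
    linear_combination (-d) * hc'
end

section
/- Suppose bias and statistical error constants satisfy: bias(P, N₁, N₂) ≤ C_p/P + C_{n₁}/N₁ + C_{n₂}/N₂ and variance(P, M₁, M₂) ≤ C₁/(PM₁) + C₂/(M₁M₂) with all constants positive. Then for every TOL > 0 and θ ∈ (0,1) there exist positive reals P, N₁, N₂, M₁, M₂ with C_p/P + C_{n₁}/N₁ + C_{n₂}/N₂ ≤ θ·TOL and C_α²(C₁/(PM₁) + C₂/(M₁M₂)) ≤ (1−θ)²·TOL², and such that the work M₁N₁P² + M₁M₂N₂P ≤ K·TOL⁻⁴ for a constant K depending only on C_p, C_{n₁}, C_{n₂}, C₁, C₂, C_α, θ. -/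
private lemma dlmc_aux (a b c d e t : ℝ) (ht : t ≠ 0) :
    a / t * (b / t) * (c / t) ^ 2 + a / t * (d / t) * (e / t) * (c / t)
      = (a * b * c ^ 2 + a * d * e * c) * (t ^ 4)⁻¹ := by
  field_simp

/-- Existence of parameter choices achieving bias and statistical constraints with total
work `O(TOL⁻⁴)`: there is a constant `K` depending only on the constants such that for
every `TOL > 0` one can pick `P, N₁, N₂, M₁, M₂ > 0` with
`C_p/P + C_{n₁}/N₁ + C_{n₂}/N₂ ≤ θTOL`,
`C_α²(C₁/(PM₁) + C₂/(M₁M₂)) ≤ (1−θ)²TOL²`, and work ≤ `K·TOL⁻⁴`. -/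
theorem dlmc_complexity_existence (Cp Cn₁ Cn₂ C₁ C₂ Cα θ : ℝ)
    (hCp : 0 < Cp) (hCn₁ : 0 < Cn₁) (hCn₂ : 0 < Cn₂)
    (hC₁ : 0 < C₁) (hC₂ : 0 < C₂) (hCα : 0 < Cα)
    (hθ : 0 < θ) (hθ1 : θ < 1) :
    ∃ K : ℝ, 0 < K ∧ ∀ TOL : ℝ, 0 < TOL →
      ∃ P N₁ N₂ M₁ M₂ : ℝ, 0 < P ∧ 0 < N₁ ∧ 0 < N₂ ∧ 0 < M₁ ∧ 0 < M₂ ∧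
        Cp / P + Cn₁ / N₁ + Cn₂ / N₂ ≤ θ * TOL ∧
        Cα ^ 2 * (C₁ / (P * M₁) + C₂ / (M₁ * M₂)) ≤ (1 - θ) ^ 2 * TOL ^ 2 ∧
        M₁ * N₁ * P ^ 2 + M₁ * M₂ * N₂ * P ≤ K * TOL ^ (-4 : ℤ) := by
  have h1θ : 0 < 1 - θ := by linarith
  set cP : ℝ := 3 * Cp / θ with hcP
  set cN1 : ℝ := 3 * Cn₁ / θ with hcN1
  set cN2 : ℝ := 3 * Cn₂ / θ with hcN2
  set cM1 : ℝ := 2 * Cα ^ 2 * C₁ * θ / (3 * Cp * (1 - θ) ^ 2) with hcM1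
  set cM2 : ℝ := 3 * Cp * C₂ / (C₁ * θ) with hcM2
  have hcPpos : 0 < cP := by positivity
  have hcN1pos : 0 < cN1 := by positivity
  have hcN2pos : 0 < cN2 := by positivity
  have hcM1pos : 0 < cM1 := by positivity
  have hcM2pos : 0 < cM2 := by positivity
  refine ⟨cM1 * cN1 * cP ^ 2 + cM1 * cM2 * cN2 * cP, by positivity, fun TOL hT => ?_⟩
  have hT0 : TOL ≠ 0 := ne_of_gt hT
  have hθ0 : θ ≠ 0 := ne_of_gt hθ
  have h1θ0 : (1 - θ) ≠ 0 := ne_of_gt h1θ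
  refine ⟨cP / TOL, cN1 / TOL, cN2 / TOL, cM1 / TOL, cM2 / TOL,
    by positivity, by positivity, by positivity, by positivity, by positivity, ?_, ?_, ?_⟩
  · have : Cp / (cP / TOL) + Cn₁ / (cN1 / TOL) + Cn₂ / (cN2 / TOL) = θ * TOL := by
      rw [hcP, hcN1, hcN2]
      field_simp
      ring
    linarith [this]
  · have : Cα ^ 2 * (C₁ / (cP / TOL * (cM1 / TOL)) + C₂ / (cM1 / TOL * (cM2 / TOL)))
        = (1 - θ) ^ 2 * TOL ^ 2 := by
      rw [hcP, hcM1, hcM2]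
      field_simp
      ring
    linarith [this]
  · have h4 : TOL ^ (-4 : ℤ) = (TOL ^ 4)⁻¹ := by
      rw [zpow_neg]
      norm_cast
    rw [h4]
    exact le_of_eq (dlmc_aux cM1 cN1 cP cM2 cN2 TOL hT0)
end
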